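/- For each sequence x in c₀ which is not eventually zero, there exists an unbounded (not norm bounded) disjointness preserving linear functional φ on c₀ with φ(x) = 1. -/

import Mathlib

/-- The space `c₀` of real sequences converging to `0`, as a submodule of `ℕ → ℝ`. -/
def czero : Submodule ℝ (ℕ → ℝ) where
  carrier := {x | Filter.Tendsto x Filter.atTop (nhds 0)}
  zero_mem' := tendsto_const_nhds
  add_mem' := by intro a b ha hb; have h := ha.add hb; simp only [add_zero] at h; exact h
  smul_mem' := by intro c x hx; have h := hx.const_smul c; simp only [smul_zero] at h; exact h

open Filter Set

set_option maxHeartbeats 1000000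

/-- For each `x ∈ c₀` which is not eventually zero, there is a norm-unbounded disjointness
preserving linear functional `φ` on `c₀` with `φ x = 1`. -/
theorem exists_unbounded_disjointness_preserving_functional_on_c0
    (x : czero) (hx : ¬∀ᶠ n in Filter.atTop, (x : ℕ → ℝ) n = 0) :
    ∃ φ : czero →ₗ[ℝ] ℝ,
      (∀ y z : czero, (∀ n : ℕ, |(y : ℕ → ℝ) n| ⊓ |(z : ℕ → ℝ) n| = 0) → φ y * φ z = 0) ∧
      (¬∃ C : ℝ, ∀ y : czero, |φ y| ≤ C * ⨆ n : ℕ, |(y : ℕ → ℝ) n|) ∧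
      φ x = 1 := by
  classical
  have hx0 : Tendsto (x : ℕ → ℝ) atTop (nhds 0) := x.2
  -- extract a strictly monotone subsequence where x is nonzero
  have hfreq : ∃ᶠ m in atTop, ¬ (x : ℕ → ℝ) m = 0 := Filter.not_eventually.1 hx
  obtain ⟨n, hmono, hne⟩ := Filter.extraction_of_frequently_atTop hfreq
  set U : Ultrafilter ℕ := Filter.hyperfilter ℕ with hU
  -- the subspace N
  set N : Submodule ℝ czero :=
    { carrier := {y : czero | {k | (y : ℕ → ℝ) (n k) = 0} ∈ U}
      zero_mem' := by simp only [Set.mem_setOf_eq, ZeroMemClass.coe_zero, Pi.zero_apply, Set.setOf_true]; exact Filter.univ_mem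
      add_mem' := by
        intro a b ha hb
        refine Filter.mem_of_superset (Filter.inter_mem ha hb) ?_
        rintro k ⟨h1, h2⟩
        simp only [Set.mem_setOf_eq] at h1 h2 ⊢
        simp [h1, h2]
      smul_mem' := by
        intro c y hy
        refine Filter.mem_of_superset hy ?_
        intro k h1
        simp only [Set.mem_setOf_eq] at h1 ⊢
        simp [h1] } with hN
  have memN : ∀ y : czero, y ∈ N ↔ {k | (y : ℕ → ℝ) (n k) = 0} ∈ U := fun y => Iff.rfl
  -- the vector w
  set u : ℕ → ℝ := fun k => (x : ℕ → ℝ) (n k) / (k + 1) with hu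
  have hu0 : Tendsto u atTop (nhds 0) := by
    have h1 : Tendsto (fun k => (x : ℕ → ℝ) (n k)) atTop (nhds 0) :=
      hx0.comp hmono.tendsto_atTop
    have h2 : Tendsto (fun k : ℕ => ((k : ℝ) + 1)⁻¹) atTop (nhds 0) := by
      simpa using tendsto_one_div_add_atTop_nhds_zero_nat (𝕜 := ℝ)
    have := h1.mul h2
    simpa [hu, div_eq_mul_inv] using this
  set wfun : ℕ → ℝ := fun m => if h : ∃ k, n k = m then u h.choose else 0 with hwfun
  have hw_at : ∀ k, wfun (n k) = u k := by
    intro k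
    have h : ∃ k', n k' = n k := ⟨k, rfl⟩
    have hc : n h.choose = n k := h.choose_spec
    have : h.choose = k := hmono.injective hc
    simp [hwfun, dif_pos h, this]
  have hw0 : Tendsto wfun atTop (nhds 0) := by
    rw [Metric.tendsto_atTop] at hu0 ⊢
    intro ε hε
    obtain ⟨K, hK⟩ := hu0 ε hε
    refine ⟨n K, fun m hm => ?_⟩
    simp only [Real.dist_eq, sub_zero] at hK ⊢
    by_cases h : ∃ k, n k = m
    · have hc : n h.choose = m := h.choose_spec
      have hKc : K ≤ h.choose := by
        by_contra hlt
        push_neg at hlt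
        have := hmono hlt
        omega
      have := hK _ hKc
      simpa [hwfun, dif_pos h] using this
    · simpa [hwfun, dif_neg h] using hε
  set W : czero := ⟨wfun, hw0⟩ with hW
  -- linear independence of the images of x and W in the quotient
  have hxW : ∀ s t : ℝ, s • x + t • W ∈ N → s = 0 ∧ t = 0 := by
    intro s t hst
    rw [memN] at hst
    have hinf : {k | ((s • x + t • W : czero) : ℕ → ℝ) (n k) = 0}.Infinite := by
      by_contra hfin
      rw [Set.not_infinite] at hfin
      exact Filter.notMem_hyperfilter_of_finite hfin hst
    obtain ⟨k1, hk1, k2, hk2, hk12⟩ := hinf.nontrivial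
    simp only [Set.mem_setOf_eq, Submodule.coe_add, Submodule.coe_smul, Pi.add_apply,
      Pi.smul_apply, smul_eq_mul] at hk1 hk2
    have he : ∀ k, s * (x : ℕ → ℝ) (n k) + t * (W : ℕ → ℝ) (n k) = 0 →
        s + t / (k + 1) = 0 := by
      intro k hk
      have hWk : (W : ℕ → ℝ) (n k) = (x : ℕ → ℝ) (n k) / (k + 1) := hw_at k
      rw [hWk] at hk
      have hxk := hne k
      have hk1' : (k : ℝ) + 1 ≠ 0 := by positivity
      field_simp at hk ⊢
      rcases mul_eq_zero.1 (by linarith [hk] : ((s * (k+1) + t) * (x : ℕ → ℝ) (n k)) = 0) with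
        h | h
      · linarith
      · exact absurd h hxk
    have e1 := he k1 hk1
    have e2 := he k2 hk2
    have ht : t = 0 := by
      by_contra ht
      have ha : (0 : ℝ) < (k1 : ℝ) + 1 := by positivity
      have hb : (0 : ℝ) < (k2 : ℝ) + 1 := by positivity
      have h4 : t / ((k1 : ℝ) + 1) = t / ((k2 : ℝ) + 1) := by linarith
      rw [div_eq_div_iff ha.ne' hb.ne'] at h4
      have h5 : ((k2 : ℝ) + 1) = ((k1 : ℝ) + 1) := mul_left_cancel₀ ht h4
      exact hk12 (by exact_mod_cast (by linarith : (k1 : ℝ) = (k2 : ℝ)))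
    have hs : s = 0 := by
      rw [ht] at e1; simpa using e1
    exact ⟨hs, ht⟩
  -- build the functional on the quotient
  set π : czero →ₗ[ℝ] (czero ⧸ N) := N.mkQ with hπ
  have hind : LinearIndependent ℝ ![π x, π W] := by
    rw [LinearIndependent.pair_iff]
    intro s t hst
    have : π (s • x + t • W) = 0 := by
      rw [map_add, map_smul, map_smul]; exact hst
    rw [hπ, Submodule.mkQ_apply, Submodule.Quotient.mk_eq_zero] at this
    exact hxW s t this
  set v : Fin 2 → (czero ⧸ N) := ![π x, π W] with hv
  set fsum : (Fin 2 →₀ ℝ) →ₗ[ℝ] ℝ := Finsupp.lapply 0 + Finsupp.lapply 1 with hfsum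
  obtain ⟨g, hg⟩ := LinearMap.exists_extend (fsum ∘ₗ hind.repr)
  set φ : czero →ₗ[ℝ] ℝ := g ∘ₗ π with hφ
  have hφN : ∀ y : czero, y ∈ N → φ y = 0 := by
    intro y hy
    have : π y = 0 := by rw [hπ, Submodule.mkQ_apply, Submodule.Quotient.mk_eq_zero]; exact hy
    simp [hφ, this]
  have hval : ∀ i : Fin 2, g (v i) = 1 := by
    intro i
    have hmem : v i ∈ Submodule.span ℝ (Set.range v) := Submodule.subset_span ⟨i, rfl⟩
    have h1 : g (v i) = fsum (hind.repr ⟨v i, hmem⟩) := by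
      have := LinearMap.congr_fun hg ⟨v i, hmem⟩
      simpa using this
    rw [hind.repr_eq_single i _ rfl, hfsum] at h1
    rw [h1]
    fin_cases i <;> simp
  have hφx : φ x = 1 := by
    have := hval 0
    simpa [hφ, hv] using this
  have hφW : φ W = 1 := by
    have := hval 1
    simpa [hφ, hv] using this
  refine ⟨φ, ?_, ?_, hφx⟩
  · -- disjointness preserving
    intro y z hyz
    have hcov : ∀ k, (y : ℕ → ℝ) (n k) = 0 ∨ (z : ℕ → ℝ) (n k) = 0 := by
      intro k
      have h := hyz (n k)
      rcases le_total |(y : ℕ → ℝ) (n k)| |(z : ℕ → ℝ) (n k)| with hle | hle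
      · left; rw [inf_eq_left.2 hle] at h; exact abs_eq_zero.1 h
      · right; rw [inf_eq_right.2 hle] at h; exact abs_eq_zero.1 h
    rcases U.mem_or_compl_mem {k | (y : ℕ → ℝ) (n k) = 0} with hA | hA
    · rw [hφN y hA, zero_mul]
    · have hB : {k | (z : ℕ → ℝ) (n k) = 0} ∈ U := by
        refine Filter.mem_of_superset hA ?_
        intro k hk
        simp only [Set.mem_compl_iff, Set.mem_setOf_eq] at hk ⊢
        exact (hcov k).resolve_left hk
      rw [hφN z hB, mul_zero]
  · -- unboundedness
    rintro ⟨C, hC⟩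
    -- bound on x
    obtain ⟨N₀, hN₀⟩ := (Metric.tendsto_atTop.1 hx0) 1 one_pos
    set B : ℝ := 1 + ∑ i ∈ Finset.range N₀, |(x : ℕ → ℝ) i| with hB
    have hBnn : ∀ m, |(x : ℕ → ℝ) m| ≤ B := by
      intro m
      rcases lt_or_ge m N₀ with hm | hm
      · have h1 : |(x : ℕ → ℝ) m| ≤ ∑ i ∈ Finset.range N₀, |(x : ℕ → ℝ) i| :=
          Finset.single_le_sum (f := fun i => |(x : ℕ → ℝ) i|)
            (fun i _ => abs_nonneg _) (Finset.mem_range.2 hm)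
        linarith
      · have h1 := hN₀ m hm
        rw [Real.dist_eq, sub_zero] at h1
        have h2 : (0 : ℝ) ≤ ∑ i ∈ Finset.range N₀, |(x : ℕ → ℝ) i| :=
          Finset.sum_nonneg fun i _ => abs_nonneg _
        linarith
    have hB0 : (0 : ℝ) ≤ B := le_trans (abs_nonneg _) (hBnn 0)
    set C' : ℝ := max C 0 with hC'
    have hC'0 : 0 ≤ C' := le_max_right _ _
    obtain ⟨K, hK⟩ := exists_nat_gt (C' * B)
    -- the truncation
    set tfun : ℕ → ℝ := fun m => if m < n K then wfun m else 0 with htfun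
    have ht0 : Tendsto tfun atTop (nhds 0) := by
      have : tfun =ᶠ[atTop] (fun _ => (0 : ℝ)) := by
        filter_upwards [Filter.eventually_ge_atTop (n K)] with m hm
        simp [htfun, not_lt.2 hm]
      exact (tendsto_congr' this).2 tendsto_const_nhds
    set T : czero := ⟨tfun, ht0⟩ with hT
    have hTN : T ∈ N := by
      rw [memN]
      refine Filter.mem_of_superset
        (Filter.mem_hyperfilter_of_finite_compl (s := {k | K ≤ k}) ?_) ?_
      · have : {k | K ≤ k}ᶜ ⊆ Set.Iio K := by intro k hk; simpa using hk
        exact (Set.finite_Iio K).subset this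
      · intro k hk
        simp only [Set.mem_setOf_eq] at hk ⊢
        have : ¬ n k < n K := not_lt.2 (hmono.le_iff_le.2 hk)
        simp [hT, htfun, this]
    set y : czero := W - T with hy
    have hφy : φ y = 1 := by
      rw [hy, map_sub, hφW, hφN T hTN, sub_zero]
    -- coordinatewise bound
    have hcoord : ∀ m, |(y : ℕ → ℝ) m| ≤ B / (K + 1) := by
      intro m
      have hKpos : (0 : ℝ) < (K : ℝ) + 1 := by positivity
      have hym : (y : ℕ → ℝ) m = if m < n K then 0 else wfun m := by
        simp only [hy, Submodule.coe_sub, Pi.sub_apply, hW, hT, htfun]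
        split_ifs <;> ring
      rw [hym]
      split_ifs with hm
      · simp only [abs_zero]
        positivity
      · by_cases h : ∃ k, n k = m
        · obtain ⟨k, hk⟩ := h
          have hwm : wfun m = u k := by rw [← hk]; exact hw_at k
          rw [hwm, hu]
          have hkK : K ≤ k := by
            by_contra hlt
            push_neg at hlt
            have := hmono hlt
            omega
          have hk1 : (0 : ℝ) < (k : ℝ) + 1 := by positivity
          rw [abs_div, abs_of_pos hk1]
          refine div_le_div₀ hB0 (hBnn _) hKpos ?_
          have := (Nat.cast_le (α := ℝ)).2 hkK
          linarith
        · simp only [hwfun, dif_neg h, abs_zero]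
          positivity
    -- conclude the contradiction
    have hbdd : BddAbove (Set.range fun m => |(y : ℕ → ℝ) m|) :=
      ⟨B / (K + 1), by rintro r ⟨m, rfl⟩; exact hcoord m⟩
    have hsup_le : (⨆ m : ℕ, |(y : ℕ → ℝ) m|) ≤ B / (K + 1) := ciSup_le hcoord
    have hsup_nn : (0 : ℝ) ≤ ⨆ m : ℕ, |(y : ℕ → ℝ) m| :=
      le_trans (abs_nonneg _) (le_ciSup hbdd 0)
    have h1 := hC y
    rw [hφy, abs_one] at h1
    have h2 : C * (⨆ m : ℕ, |(y : ℕ → ℝ) m|) ≤ C' * (⨆ m : ℕ, |(y : ℕ → ℝ) m|) :=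
      mul_le_mul_of_nonneg_right (le_max_left _ _) hsup_nn
    have h3 : C' * (⨆ m : ℕ, |(y : ℕ → ℝ) m|) ≤ C' * (B / (K + 1)) :=
      mul_le_mul_of_nonneg_left hsup_le hC'0
    have hKpos : (0 : ℝ) < (K : ℝ) + 1 := by positivity
    have h4 : C' * (B / (K + 1)) < 1 := by
      rw [← mul_div_assoc, div_lt_one hKpos]
      linarith
    linarith
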